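/- Let p⃗₁, p⃗₂, p⃗₃, p⃗₄ ∈ ℂ² and m > 0 satisfy ‖p⃗₁ − p⃗₂‖ ≥ m and ‖p⃗₃ − p⃗₄‖ ≥ m, and suppose ‖(p⃗₁ − p⃗₃) − (p⃗₂ − p⃗₄)‖ ≥ 16·‖(p⃗₁ + p⃗₃) − (p⃗₂ + p⃗₄)‖. Then ‖(p⃗₁ − p⃗₃) − (p⃗₂ − p⃗₄)‖ ≥ 32m/√257, and for every (α₀, β₀) ∈ ℝ² with ‖(α₀, β₀)‖ ≥ 1/8, ‖G_{1,3}(α₀, β₀) − G_{2,4}(α₀, β₀)‖ ≥ (1/32)·‖(p⃗₁ − p⃗₃) − (p⃗₂ − p⃗₄)‖ ≥ m/√257, where G_{1,3}, G_{2,4} are as defined below. -/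

import Mathlib

noncomputable section

/-- `ℂ²` with its Euclidean (Hermitian) metric. -/
abbrev C2 := EuclideanSpace ℂ (Fin 2)

/-- The point `(a + b·i, c + d·i)` of `ℂ²`. -/
def pC (a b c d : ℝ) : C2 :=
  WithLp.toLp 2 (fun i : Fin 2 => if i = 0 then Complex.mk a b else Complex.mk c d)

/-- The point of `ℝ⁶` with coordinates `(x₁, …, x₆)`. -/
def pt6 (x₁ x₂ x₃ x₄ x₅ x₆ : ℝ) : EuclideanSpace ℝ (Fin 6) :=
  WithLp.toLp 2 (fun i : Fin 6 => if i = 0 then x₁ else if i = 1 then x₂ else if i = 2 then x₃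
    else if i = 3 then x₄ else if i = 4 then x₅ else x₆)

/-- The parameterization `G : ℝ² → ℝ⁶` of the real 2-plane corresponding to the auxiliary
complex line associated to the points `(a + b·i, c + d·i)` and `(a' + b'·i, c' + d'·i)`
of `ℂ²`. -/
def Gmap (a b c d a' b' c' d' : ℝ) (α β : ℝ) : EuclideanSpace ℝ (Fin 6) :=
  pt6 ((a + a') / 2) ((b + b') / 2) ((c + c') / 2) ((d + d') / 2) 0 0
    + α • pt6 ((c - c') / 2) ((d - d') / 2) (-((a - a') / 2)) (-((b - b') / 2)) 1 0
    + β • pt6 (-((d - d') / 2)) ((c - c') / 2) ((b - b') / 2) (-((a - a') / 2)) 0 1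

lemma normC2 (x : C2) :
    ‖x‖ = Real.sqrt ((x 0).re^2 + (x 0).im^2 + ((x 1).re^2 + (x 1).im^2)) := by
  rw [EuclideanSpace.norm_eq]
  congr 1
  rw [Fin.sum_univ_two]
  simp [Complex.sq_norm, Complex.normSq_apply]
  ring

lemma pt6_add (x₁ x₂ x₃ x₄ x₅ x₆ y₁ y₂ y₃ y₄ y₅ y₆ : ℝ) :
    pt6 x₁ x₂ x₃ x₄ x₅ x₆ + pt6 y₁ y₂ y₃ y₄ y₅ y₆
      = pt6 (x₁+y₁) (x₂+y₂) (x₃+y₃) (x₄+y₄) (x₅+y₅) (x₆+y₆) := by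
  ext i
  show pt6 x₁ x₂ x₃ x₄ x₅ x₆ i + pt6 y₁ y₂ y₃ y₄ y₅ y₆ i = _
  simp only [pt6, PiLp.toLp_apply]
  split_ifs <;> rfl

lemma pt6_sub (x₁ x₂ x₃ x₄ x₅ x₆ y₁ y₂ y₃ y₄ y₅ y₆ : ℝ) :
    pt6 x₁ x₂ x₃ x₄ x₅ x₆ - pt6 y₁ y₂ y₃ y₄ y₅ y₆
      = pt6 (x₁-y₁) (x₂-y₂) (x₃-y₃) (x₄-y₄) (x₅-y₅) (x₆-y₆) := by
  ext i
  show pt6 x₁ x₂ x₃ x₄ x₅ x₆ i - pt6 y₁ y₂ y₃ y₄ y₅ y₆ i = _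
  simp only [pt6, PiLp.toLp_apply]
  split_ifs <;> rfl

lemma pt6_smul (r x₁ x₂ x₃ x₄ x₅ x₆ : ℝ) :
    r • pt6 x₁ x₂ x₃ x₄ x₅ x₆ = pt6 (r*x₁) (r*x₂) (r*x₃) (r*x₄) (r*x₅) (r*x₆) := by
  ext i
  show r * pt6 x₁ x₂ x₃ x₄ x₅ x₆ i = _
  simp only [pt6, PiLp.toLp_apply]
  split_ifs <;> rfl

lemma norm_pt6 (x₁ x₂ x₃ x₄ x₅ x₆ : ℝ) :
    ‖pt6 x₁ x₂ x₃ x₄ x₅ x₆‖ = Real.sqrt (x₁^2+x₂^2+x₃^2+x₄^2+x₅^2+x₆^2) := by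
  rw [EuclideanSpace.norm_eq]
  congr 1
  rw [Fin.sum_univ_six]
  simp [pt6, Real.norm_eq_abs, sq_abs]

/-- If `0 ≤ x` and `x ≤ √y` (with `0 ≤ y`) then `x² ≤ y`. -/
lemma sq_le_of_le_sqrt' {x y : ℝ} (hx : 0 ≤ x) (hy : 0 ≤ y) (h : x ≤ Real.sqrt y) :
    x^2 ≤ y := by
  have h1 := Real.sq_sqrt hy
  nlinarith [Real.sqrt_nonneg y]

/-- From `16√s ≤ √q` deduce `256 s ≤ q`. -/
lemma aux256 {s q : ℝ} (hs : 0 ≤ s) (hq : 0 ≤ q) (h : 16 * Real.sqrt s ≤ Real.sqrt q) :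
    256 * s ≤ q := by
  have h1 := Real.sq_sqrt hs
  have h2 := Real.sq_sqrt hq
  nlinarith [Real.sqrt_nonneg s, Real.sqrt_nonneg q]

/-- From `1024 m² ≤ 257 q` deduce `32m/√257 ≤ √q`. -/
lemma part1aux {m q : ℝ} (hm : 0 < m) (hq : 0 ≤ q) (h : 1024 * m^2 ≤ 257 * q) :
    32 * m / Real.sqrt 257 ≤ Real.sqrt q := by
  have h257 : (0:ℝ) < Real.sqrt 257 := Real.sqrt_pos.mpr (by norm_num)
  rw [div_le_iff₀ h257, ← Real.sqrt_mul hq]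
  rw [show (32:ℝ) * m = Real.sqrt ((32*m)^2) from (Real.sqrt_sq (by positivity)).symm]
  apply Real.sqrt_le_sqrt
  nlinarith

/-- Bessel-type inequality coming from the quaternionic structure of `ℝ⁴`. -/
lemma quatPQ (Sa Sb Sc Sd Da Db Dc Dd : ℝ) :
    (Sa*Dc + Sb*Dd - Sc*Da - Sd*Db)^2 + (-(Sa*Dd) + Sb*Dc + Sc*Db - Sd*Da)^2
      ≤ (Sa^2 + Sb^2 + Sc^2 + Sd^2) * (Da^2 + Db^2 + Dc^2 + Dd^2) := by
  nlinarith [sq_nonneg (Sa*Da - Sb*Db + Sc*Dc - Sd*Dd),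
    sq_nonneg (Sa*Db + Sb*Da + Sc*Dd + Sd*Dc)]

/-- The key quadratic estimate in abstract form. -/
lemma key2 {q s P Q α β X : ℝ} (hq : 0 ≤ q) (hs : 0 ≤ s) (h256 : 256 * s ≤ q)
    (hr : 1/64 ≤ α^2 + β^2) (hPQ : P^2 + Q^2 ≤ s * q)
    (hid : 4 * X = s + (α^2 + β^2) * q + 2 * (α*P + β*Q)) :
    q / 1024 ≤ X := by
  have hr0 : (0:ℝ) ≤ α^2 + β^2 := by positivity
  have hc2 : (α*P + β*Q)^2 ≤ (α^2 + β^2) * (s * q) := by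
    nlinarith [sq_nonneg (α*Q - β*P), mul_le_mul_of_nonneg_left hPQ hr0]
  have hA0 : 0 ≤ (α^2 + β^2) * q + s - q/256 := by nlinarith
  have hA2 : 4 * ((α^2 + β^2) * (s * q)) ≤ ((α^2 + β^2) * q + s - q/256)^2 := by
    nlinarith [mul_nonneg (mul_nonneg hr0 hq)
        (show (0:ℝ) ≤ (α^2 + β^2)*q - 4*(q/256) by nlinarith),
      mul_nonneg (show (0:ℝ) ≤ q/256 - s by linarith)
        (show (0:ℝ) ≤ 2*((α^2 + β^2)*q) - s + q/256 by nlinarith)]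
  have hAc : 0 ≤ (α^2 + β^2) * q + s - q/256 + 2*(α*P + β*Q) := by
    nlinarith [hA2, hc2, hA0]
  linarith

/-- From `q/1024 ≤ X` deduce `√q/32 ≤ √X`. -/
lemma sqrt_div32 {q X : ℝ} (hq : 0 ≤ q) (h : q / 1024 ≤ X) :
    1/32 * Real.sqrt q ≤ Real.sqrt X := by
  have h1 : Real.sqrt (q/1024) ≤ Real.sqrt X := Real.sqrt_le_sqrt h
  have h2 : Real.sqrt (q/1024) = Real.sqrt q / 32 := by
    rw [show (1024:ℝ) = 32^2 by norm_num, Real.sqrt_div hq,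
      Real.sqrt_sq (by norm_num : (0:ℝ) ≤ 32)]
  linarith

/-- Final step: combine the two square-root estimates. -/
lemma final_step {m q x : ℝ} (part1 : 32 * m / Real.sqrt 257 ≤ Real.sqrt q)
    (hmain : 1/32 * Real.sqrt q ≤ Real.sqrt x) : m / Real.sqrt 257 ≤ Real.sqrt x := by
  have h257 : (0:ℝ) < Real.sqrt 257 := Real.sqrt_pos.mpr (by norm_num)
  rw [div_le_iff₀ h257] at part1 ⊢
  nlinarith [part1, hmain, h257]

set_option maxHeartbeats 1000000 in
/-- Case 2 in the proof of Claim 5.3. -/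
theorem statement19 (a₁ b₁ c₁ d₁ a₂ b₂ c₂ d₂ a₃ b₃ c₃ d₃ a₄ b₄ c₄ d₄ : ℝ)
    (p₁ p₂ p₃ p₄ : C2)
    (hp₁ : p₁ = pC a₁ b₁ c₁ d₁) (hp₂ : p₂ = pC a₂ b₂ c₂ d₂)
    (hp₃ : p₃ = pC a₃ b₃ c₃ d₃) (hp₄ : p₄ = pC a₄ b₄ c₄ d₄)
    (m : ℝ) (hm : 0 < m)
    (h₁₂ : m ≤ ‖p₁ - p₂‖) (h₃₄ : m ≤ ‖p₃ - p₄‖)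
    (h : 16 * ‖(p₁ + p₃) - (p₂ + p₄)‖ ≤ ‖(p₁ - p₃) - (p₂ - p₄)‖) :
    32 * m / Real.sqrt 257 ≤ ‖(p₁ - p₃) - (p₂ - p₄)‖ ∧
    ∀ α₀ β₀ : ℝ, 1 / 8 ≤ Real.sqrt (α₀ ^ 2 + β₀ ^ 2) →
      1 / 32 * ‖(p₁ - p₃) - (p₂ - p₄)‖ ≤
          ‖Gmap a₁ b₁ c₁ d₁ a₃ b₃ c₃ d₃ α₀ β₀ - Gmap a₂ b₂ c₂ d₂ a₄ b₄ c₄ d₄ α₀ β₀‖ ∧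
      m / Real.sqrt 257 ≤
          ‖Gmap a₁ b₁ c₁ d₁ a₃ b₃ c₃ d₃ α₀ β₀ - Gmap a₂ b₂ c₂ d₂ a₄ b₄ c₄ d₄ α₀ β₀‖ := by
  subst hp₁ hp₂ hp₃ hp₄
  obtain ⟨Da, hDa⟩ : ∃ t : ℝ, t = a₁ - a₃ - (a₂ - a₄) := ⟨_, rfl⟩
  obtain ⟨Db, hDb⟩ : ∃ t : ℝ, t = b₁ - b₃ - (b₂ - b₄) := ⟨_, rfl⟩
  obtain ⟨Dc, hDc⟩ : ∃ t : ℝ, t = c₁ - c₃ - (c₂ - c₄) := ⟨_, rfl⟩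
  obtain ⟨Dd, hDd⟩ : ∃ t : ℝ, t = d₁ - d₃ - (d₂ - d₄) := ⟨_, rfl⟩
  obtain ⟨Sa, hSa⟩ : ∃ t : ℝ, t = a₁ + a₃ - (a₂ + a₄) := ⟨_, rfl⟩
  obtain ⟨Sb, hSb⟩ : ∃ t : ℝ, t = b₁ + b₃ - (b₂ + b₄) := ⟨_, rfl⟩
  obtain ⟨Sc, hSc⟩ : ∃ t : ℝ, t = c₁ + c₃ - (c₂ + c₄) := ⟨_, rfl⟩
  obtain ⟨Sd, hSd⟩ : ∃ t : ℝ, t = d₁ + d₃ - (d₂ + d₄) := ⟨_, rfl⟩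
  obtain ⟨qD, hqD⟩ : ∃ t : ℝ, t = Da^2 + Db^2 + Dc^2 + Dd^2 := ⟨_, rfl⟩
  obtain ⟨qS, hqS⟩ : ∃ t : ℝ, t = Sa^2 + Sb^2 + Sc^2 + Sd^2 := ⟨_, rfl⟩
  have hqD0 : 0 ≤ qD := by rw [hqD]; positivity
  have hqS0 : 0 ≤ qS := by rw [hqS]; positivity
  -- norms of the complex differences
  have hDnorm : ‖(pC a₁ b₁ c₁ d₁ - pC a₃ b₃ c₃ d₃) - (pC a₂ b₂ c₂ d₂ - pC a₄ b₄ c₄ d₄)‖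
      = Real.sqrt qD := by
    rw [normC2]
    congr 1
    simp [pC]
    rw [hqD, hDa, hDb, hDc, hDd]
    ring
  have hSnorm : ‖(pC a₁ b₁ c₁ d₁ + pC a₃ b₃ c₃ d₃) - (pC a₂ b₂ c₂ d₂ + pC a₄ b₄ c₄ d₄)‖
      = Real.sqrt qS := by
    rw [normC2]
    congr 1
    simp [pC]
    rw [hqS, hSa, hSb, hSc, hSd]
    ring
  obtain ⟨e12, he12⟩ : ∃ t : ℝ, t = (a₁-a₂)^2 + (b₁-b₂)^2 + (c₁-c₂)^2 + (d₁-d₂)^2 := ⟨_, rfl⟩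
  obtain ⟨e34, he34⟩ : ∃ t : ℝ, t = (a₃-a₄)^2 + (b₃-b₄)^2 + (c₃-c₄)^2 + (d₃-d₄)^2 := ⟨_, rfl⟩
  have he120 : 0 ≤ e12 := by rw [he12]; positivity
  have he340 : 0 ≤ e34 := by rw [he34]; positivity
  have h12norm : ‖pC a₁ b₁ c₁ d₁ - pC a₂ b₂ c₂ d₂‖ = Real.sqrt e12 := by
    rw [normC2]
    congr 1
    simp [pC]
    rw [he12]
    ring
  have h34norm : ‖pC a₃ b₃ c₃ d₃ - pC a₄ b₄ c₄ d₄‖ = Real.sqrt e34 := by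
    rw [normC2]
    congr 1
    simp [pC]
    rw [he34]
    ring
  rw [hDnorm]
  rw [hDnorm, hSnorm] at h
  rw [h12norm] at h₁₂
  rw [h34norm] at h₃₄
  -- squared versions of hypotheses
  have he12sq : m^2 ≤ e12 := sq_le_of_le_sqrt' hm.le he120 h₁₂
  have he34sq : m^2 ≤ e34 := sq_le_of_le_sqrt' hm.le he340 h₃₄
  have h256 : 256 * qS ≤ qD := by
    refine aux256 hqS0 hqD0 ?_
    linarith only [h]
  -- key polynomial inequality for part 1
  have hkey : 1024 * m^2 ≤ 257 * qD := by
    have hident : 4 * e12 + 4 * e34 = 2 * qD + 2 * qS := by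
      rw [he12, he34, hqD, hqS, hDa, hDb, hDc, hDd, hSa, hSb, hSc, hSd]; ring
    linarith only [hident, he12sq, he34sq, h256, hqS0]
  have part1 : 32 * m / Real.sqrt 257 ≤ Real.sqrt qD := part1aux hm hqD0 hkey
  refine ⟨part1, fun α₀ β₀ h8 => ?_⟩
  -- squared version of the parameter bound
  have hr : 1/64 ≤ α₀^2 + β₀^2 := by
    have := sq_le_of_le_sqrt' (by norm_num : (0:ℝ) ≤ 1/8) (by positivity) h8
    linarith only [this]
  -- norm of the Gmap difference
  obtain ⟨X, hX⟩ : ∃ t : ℝ, t = (Sa/2 + α₀*(Dc/2) - β₀*(Dd/2))^2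
      + (Sb/2 + α₀*(Dd/2) + β₀*(Dc/2))^2
      + (Sc/2 - α₀*(Da/2) + β₀*(Db/2))^2
      + (Sd/2 - α₀*(Db/2) - β₀*(Da/2))^2 := ⟨_, rfl⟩
  have hGnorm : ‖Gmap a₁ b₁ c₁ d₁ a₃ b₃ c₃ d₃ α₀ β₀ - Gmap a₂ b₂ c₂ d₂ a₄ b₄ c₄ d₄ α₀ β₀‖
      = Real.sqrt X := by
    rw [Gmap, Gmap, pt6_smul, pt6_smul, pt6_smul, pt6_smul, pt6_add, pt6_add, pt6_add,
      pt6_add, pt6_sub, norm_pt6]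
    congr 1
    rw [hX, hDa, hDb, hDc, hDd, hSa, hSb, hSc, hSd]
    ring
  rw [hGnorm]
  -- the main polynomial inequality : qD / 1024 ≤ X
  obtain ⟨P, hP⟩ : ∃ t : ℝ, t = Sa*Dc + Sb*Dd - Sc*Da - Sd*Db := ⟨_, rfl⟩
  obtain ⟨Q, hQ⟩ : ∃ t : ℝ, t = -(Sa*Dd) + Sb*Dc + Sc*Db - Sd*Da := ⟨_, rfl⟩
  have hid1 : 4 * X = qS + (α₀^2 + β₀^2) * qD + 2 * (α₀*P + β₀*Q) := by
    rw [hX, hqS, hqD, hP, hQ]; ring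
  have hPQ : P^2 + Q^2 ≤ qS * qD := by
    rw [hP, hQ, hqS, hqD]; exact quatPQ Sa Sb Sc Sd Da Db Dc Dd
  have hXge : qD / 1024 ≤ X := key2 hqD0 hqS0 h256 hr hPQ hid1
  have hmain : 1/32 * Real.sqrt qD ≤ Real.sqrt X := sqrt_div32 hqD0 hXge
  exact ⟨hmain, final_step part1 hmain⟩
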